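/- Let M be a finitely generated ℤ[σ]-submodule of ℚ[σ] (the polynomial ring in one variable over ℚ). Let M̃ be the union of all ℤ[σ]-submodules N of ℚ[σ] such that N/M is finite. Then M̃ is generated by a single element as a ℤ[σ]-module. -/

import Mathlib

open Polynomial

noncomputable section

namespace Stmt8Aux


abbrev phi : Polynomial ℤ →+* Polynomial ℚ := Polynomial.mapRingHom (Int.castRingHom ℚ)

lemma phi_inj : Function.Injective phi :=
  Polynomial.map_injective _ Int.cast_injective

lemma den_clear (x : ℚ) : ((x.den : ℚ)) * x = (x.num : ℚ) := by
  rw [mul_comm]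
  rw (occs := .pos [1]) [← Rat.num_div_den x]
  rw [div_mul_cancel₀]
  exact_mod_cast x.den_nz

lemma clear_denom (q : Polynomial ℚ) :
    ∃ n : ℕ, 0 < n ∧ ((n : Polynomial ℚ)) * q ∈ phi.range := by
  set n : ℕ := q.support.prod (fun i => (q.coeff i).den) with hn
  refine ⟨n, Finset.prod_pos fun i _ => (q.coeff i).pos, ?_⟩
  rw [Polynomial.mem_map_range]
  intro i
  have hC : ((n : ℕ) : Polynomial ℚ) = Polynomial.C ((n : ℕ) : ℚ) :=
    (Polynomial.C_eq_natCast _).symm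
  rw [hC, Polynomial.coeff_C_mul]
  rcases eq_or_ne (q.coeff i) 0 with h | h
  · exact ⟨0, by simp [h]⟩
  · have hi : i ∈ q.support := Polynomial.mem_support_iff.mpr h
    obtain ⟨m, hm⟩ := Finset.dvd_prod_of_mem (fun i => (q.coeff i).den) hi
    refine ⟨(q.coeff i).num * m, ?_⟩
    have : ((n : ℕ) : ℚ) = ((q.coeff i).den : ℚ) * (m : ℚ) := by
      rw [hn]; exact_mod_cast congrArg (fun k : ℕ => (k : ℚ)) hm
    rw [this]
    push_cast
    rw [mul_assoc, mul_comm (m : ℚ) (q.coeff i), ← mul_assoc, den_clear (q.coeff i)]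
    simp

lemma clear_denom_mono {q : Polynomial ℚ} {n m : ℕ}
    (h : ((n : Polynomial ℚ)) * q ∈ phi.range) :
    ((m * n : ℕ) : Polynomial ℚ) * q ∈ phi.range := by
  obtain ⟨c, hc⟩ := h
  exact ⟨(m : Polynomial ℤ) * c, by push_cast; rw [map_mul, hc, map_natCast]; ring⟩

lemma clear_denoms (F : Finset (Polynomial ℚ)) (v : Polynomial ℚ → Polynomial ℚ) :
    ∃ n : ℕ, 0 < n ∧ ∀ f ∈ F, ((n : Polynomial ℚ)) * v f ∈ phi.range := by
  classical
  induction F using Finset.induction_on with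
  | empty => exact ⟨1, one_pos, by simp⟩
  | insert _ _ hfn ih =>
    rename_i f s
    obtain ⟨n, hn, hall⟩ := ih
    obtain ⟨m, hm, hf⟩ := clear_denom (v f)
    refine ⟨n * m, Nat.mul_pos hn hm, ?_⟩
    intro g hg
    rcases Finset.mem_insert.mp hg with rfl | hgs
    · exact clear_denom_mono hf
    · rw [mul_comm n m]; exact clear_denom_mono (hall g hgs)



lemma mem_range_of_shift {q : Polynomial ℚ} {k l : ℕ} (h : q.natDegree + k < l)
    (hm : q * X ^ l - q * X ^ k ∈ phi.range) : q ∈ phi.range := by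
  rw [Polynomial.mem_map_range] at hm ⊢
  intro i
  rcases le_or_gt i q.natDegree with hi | hi
  · have := hm (i + l)
    rw [Polynomial.coeff_sub, Polynomial.coeff_mul_X_pow,
      Polynomial.coeff_mul_X_pow'] at this
    rw [if_pos (by omega : k ≤ i + l)] at this
    have hz : q.coeff (i + l - k) = 0 :=
      Polynomial.coeff_eq_zero_of_natDegree_lt (by omega)
    rwa [hz, sub_zero] at this
  · rw [Polynomial.coeff_eq_zero_of_natDegree_lt hi]
    exact zero_mem _

lemma mul_phi_mem (M : AddSubgroup (Polynomial ℚ))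
    (hXM : ∀ x ∈ M, Polynomial.X * x ∈ M)
    (c : Polynomial ℤ) {x : Polynomial ℚ} (hx : x ∈ M) : phi c * x ∈ M := by
  induction c using Polynomial.induction_on with
  | C a =>
    have : phi (C a) * x = a • x := by
      simp only [coe_mapRingHom, Polynomial.map_C, zsmul_eq_mul]
      rw [← Polynomial.C_eq_intCast]
      norm_num
    rw [this]
    exact M.zsmul_mem hx a
  | add p q hp hq =>
    rw [map_add, add_mul]
    exact M.add_mem hp hq
  | monomial n a hrec =>
    have : phi (C a * X ^ (n + 1)) * x = X * (phi (C a * X ^ n) * x) := by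
      simp only [map_mul, map_pow, Polynomial.map_X, Polynomial.map_C, coe_mapRingHom]
      ring
    rw [this]
    exact hXM _ hrec

lemma xpow_mul_mem (N : AddSubgroup (Polynomial ℚ))
    (hXN : ∀ y ∈ N, Polynomial.X * y ∈ N)
    {x : Polynomial ℚ} (hx : x ∈ N) (m : ℕ) : X ^ m * x ∈ N := by
  induction m with
  | zero => simpa using hx
  | succ m ih =>
    have : X ^ (m + 1) * x = X * (X ^ m * x) := by ring
    rw [this]; exact hXN _ ih



lemma finite_quot_mono {R : Type*} [CommRing R] {I J : Ideal R} (h : I ≤ J)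
    (hI : Finite (R ⧸ I)) : Finite (R ⧸ J) := by
  apply Finite.of_surjective (Ideal.Quotient.factor h)
  intro b
  obtain ⟨x, rfl⟩ := Ideal.Quotient.mk_surjective b
  exact ⟨Ideal.Quotient.mk I x, Ideal.Quotient.factor_mk h x⟩

lemma finite_quot_aux (p : ℕ) (hp : p.Prime) (z : Polynomial ℤ)
    (hz : ¬ (C ((p : ℕ) : ℤ) ∣ z)) :
    Finite (Polynomial ℤ ⧸ (Ideal.span {C ((p : ℕ) : ℤ), z} : Ideal (Polynomial ℤ))) := by
  haveI : Fact p.Prime := ⟨hp⟩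
  set π : ℤ →+* ZMod p := Int.castRingHom (ZMod p) with hπ
  set zb : Polynomial (ZMod p) := z.map π with hzbdef
  have hzb : zb ≠ 0 := by
    intro h0
    apply hz
    rw [Polynomial.C_dvd_iff_dvd_coeff]
    intro i
    have hc : zb.coeff i = 0 := by rw [h0, Polynomial.coeff_zero]
    rw [hzbdef, Polynomial.coeff_map] at hc
    exact (ZMod.intCast_zmod_eq_zero_iff_dvd _ p).mp hc
  have hfin : Finite (AdjoinRoot zb) := by
    have pb := AdjoinRoot.powerBasis hzb
    exact Finite.of_equiv _ pb.basis.equivFun.toEquiv.symm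
  set χ : Polynomial ℤ →+* AdjoinRoot zb :=
    (AdjoinRoot.mk zb).comp (Polynomial.mapRingHom π) with hχ
  have hsurj : Function.Surjective χ := by
    rw [hχ, RingHom.coe_comp, Polynomial.coe_mapRingHom]
    exact Function.Surjective.comp AdjoinRoot.mk_surjective
      (Polynomial.map_surjective π ZMod.intCast_surjective)
  have hker : RingHom.ker χ ≤ Ideal.span {C ((p : ℕ) : ℤ), z} := by
    intro g hg
    have h0 : AdjoinRoot.mk zb (g.map π) = 0 := hg
    have hdvd : zb ∣ g.map π := (AdjoinRoot.mk_eq_zero).mp h0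
    obtain ⟨hb, hhb⟩ := hdvd
    obtain ⟨H, rfl⟩ := Polynomial.map_surjective π ZMod.intCast_surjective hb
    have hmap0 : (g - z * H).map π = 0 := by
      rw [Polynomial.map_sub, Polynomial.map_mul, hhb]
      ring
    have hCp : C ((p : ℕ) : ℤ) ∣ g - z * H := by
      rw [Polynomial.C_dvd_iff_dvd_coeff]
      intro i
      have hci : ((g - z * H).map π).coeff i = 0 := by rw [hmap0, Polynomial.coeff_zero]
      rw [Polynomial.coeff_map] at hci
      exact (ZMod.intCast_zmod_eq_zero_iff_dvd _ p).mp hci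
    obtain ⟨w, hw⟩ := hCp
    rw [Ideal.mem_span_pair]
    exact ⟨w, H, by linear_combination -hw⟩
  have hfin2 : Finite (Polynomial ℤ ⧸ RingHom.ker χ) :=
    Finite.of_equiv _ (RingHom.quotientKerEquivOfSurjective hsurj).toEquiv.symm
  exact finite_quot_mono hker hfin2

lemma finite_quot : ∀ (n : ℕ) (I : Ideal (Polynomial ℤ)), 0 < n →
    ((n : Polynomial ℤ) ∈ I) →
    (∀ r : ℤ, Prime r → ∃ z ∈ I, ¬ (C r ∣ z)) → Finite (Polynomial ℤ ⧸ I) := by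
  intro n
  induction n using Nat.strong_induction_on with
  | _ n ih =>
  intro I hn hnI hcont
  rcases eq_or_ne n 1 with rfl | hn1
  · have h1 : (1 : Polynomial ℤ) ∈ I := by simpa using hnI
    have hT : I = ⊤ := (Ideal.eq_top_iff_one I).mpr h1
    subst hT
    have : Subsingleton (Polynomial ℤ ⧸ (⊤ : Ideal (Polynomial ℤ))) :=
      Ideal.Quotient.subsingleton_iff.mpr rfl
    exact Finite.of_subsingleton
  · obtain ⟨p, hp, hpd⟩ := Nat.exists_prime_and_dvd hn1
    have hpZ : Prime ((p : ℕ) : ℤ) := Nat.prime_iff_prime_int.mp hp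
    obtain ⟨z, hzI, hz⟩ := hcont ((p : ℕ) : ℤ) hpZ
    set J₂ : Ideal (Polynomial ℤ) := I ⊔ Ideal.span {C ((p : ℕ) : ℤ)} with hJ₂
    have h2 : Finite (Polynomial ℤ ⧸ J₂) := by
      have hle : Ideal.span {C ((p : ℕ) : ℤ), z} ≤ J₂ := by
        rw [Ideal.span_le]
        rintro w hw
        rcases hw with rfl | hw
        · exact Ideal.mem_sup_right (Ideal.subset_span rfl)
        · rw [Set.mem_singleton_iff] at hw
          subst hw
          exact Ideal.mem_sup_left hzI
      exact finite_quot_mono hle (finite_quot_aux p hp z hz)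
    set I₁ : Ideal (Polynomial ℤ) :=
      { carrier := {g | C ((p : ℕ) : ℤ) * g ∈ I}
        add_mem' := fun {a b} ha hb => by
          simp only [Set.mem_setOf_eq] at *
          rw [mul_add]; exact I.add_mem ha hb
        zero_mem' := by simp only [Set.mem_setOf_eq, mul_zero]; exact I.zero_mem
        smul_mem' := fun c x hx => by
          simp only [Set.mem_setOf_eq, smul_eq_mul] at *
          have : C ((p : ℕ) : ℤ) * (c * x) = c * (C ((p : ℕ) : ℤ) * x) := by ring
          rw [this]; exact I.mul_mem_left c hx } with hI₁
    have hmemI₁ : ∀ g, g ∈ I₁ ↔ C ((p : ℕ) : ℤ) * g ∈ I := fun _ => Iff.rfl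
    have h1 : Finite (Polynomial ℤ ⧸ I₁) := by
      apply ih (n / p) (Nat.div_lt_self hn hp.one_lt)
      · exact Nat.div_pos (Nat.le_of_dvd hn hpd) hp.pos
      · rw [hmemI₁]
        have heq : C ((p : ℕ) : ℤ) * ((n / p : ℕ) : Polynomial ℤ) = ((n : ℕ) : Polynomial ℤ) := by
          rw [Polynomial.C_eq_natCast, ← Nat.cast_mul, Nat.mul_div_cancel' hpd]
        rw [heq]; exact hnI
      · intro r hr
        obtain ⟨w, hwI, hw⟩ := hcont r hr
        exact ⟨w, (hmemI₁ w).mpr (I.mul_mem_left _ hwI), hw⟩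
    -- assemble via surjection from the product
    have hs := Ideal.Quotient.mk_surjective (I := J₂)
    have ht := Ideal.Quotient.mk_surjective (I := I₁)
    set s : (Polynomial ℤ ⧸ J₂) → Polynomial ℤ := Function.surjInv hs with hsdef
    set t : (Polynomial ℤ ⧸ I₁) → Polynomial ℤ := Function.surjInv ht with htdef
    have hΨ : Function.Surjective (fun ab : (Polynomial ℤ ⧸ J₂) × (Polynomial ℤ ⧸ I₁) =>
        Ideal.Quotient.mk I (s ab.1 + C ((p : ℕ) : ℤ) * t ab.2)) := by
      intro y
      obtain ⟨x, rfl⟩ := Ideal.Quotient.mk_surjective y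
      set a : Polynomial ℤ ⧸ J₂ := Ideal.Quotient.mk J₂ x with ha
      have hsa : Ideal.Quotient.mk J₂ (s a) = a := Function.surjInv_eq hs a
      have hxs : x - s a ∈ J₂ := by
        rw [← Ideal.Quotient.eq]
        exact hsa.symm
      rw [hJ₂] at hxs
      obtain ⟨i, hi, w, hwmem, hiw⟩ := Submodule.mem_sup.mp hxs
      obtain ⟨g, hg⟩ := Ideal.mem_span_singleton'.mp hwmem
      set b : Polynomial ℤ ⧸ I₁ := Ideal.Quotient.mk I₁ g with hb
      have htb : Ideal.Quotient.mk I₁ (t b) = b := Function.surjInv_eq ht b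
      have htbg : t b - g ∈ I₁ := by
        rw [← Ideal.Quotient.eq]
        exact htb
      have htbg' : C ((p : ℕ) : ℤ) * (t b - g) ∈ I := (hmemI₁ _).mp htbg
      refine ⟨⟨a, b⟩, ?_⟩
      rw [Ideal.Quotient.eq]
      have heq : s a + C ((p : ℕ) : ℤ) * t b - x
          = C ((p : ℕ) : ℤ) * (t b - g) + (-i) := by
        linear_combination hiw + hg
      rw [heq]
      exact I.add_mem htbg' (I.neg_mem hi)
    exact Finite.of_surjective _ hΨ

end Stmt8Aux

open Stmt8Aux in
/-- Let `M` be a finitely generated `ℤ[σ]`-submodule of `ℚ[σ]` and let `M̃` be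
the union of all `ℤ[σ]`-submodules `N` of `ℚ[σ]` with `N/M` finite. Then `M̃` is
generated by a single element as a `ℤ[σ]`-module. -/
theorem stmt_8 (M : AddSubgroup (Polynomial ℚ))
    (hXM : ∀ x ∈ M, Polynomial.X * x ∈ M)
    (hfg : ∃ F : Finset (Polynomial ℚ), (↑F : Set (Polynomial ℚ)) ⊆ M ∧
      ∀ x ∈ M, ∃ c : Polynomial ℚ → Polynomial ℤ,
        x = ∑ f ∈ F, (c f).map (Int.castRingHom ℚ) * f) :
    ∃ g : Polynomial ℚ,
      {x : Polynomial ℚ | ∃ N : AddSubgroup (Polynomial ℚ),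
          (∀ y ∈ N, Polynomial.X * y ∈ N) ∧ M ≤ N ∧
          (M.addSubgroupOf N).index ≠ 0 ∧ x ∈ N} =
      {x : Polynomial ℚ | ∃ c : Polynomial ℤ, x = c.map (Int.castRingHom ℚ) * g} := by
  classical
  obtain ⟨F, hFM, hrep⟩ := hfg
  by_cases hF0 : ∀ f ∈ F, f = (0 : Polynomial ℚ)
  · -- M = ⊥
    have hM0 : ∀ x ∈ M, x = 0 := by
      intro x hx
      obtain ⟨c, hc⟩ := hrep x hx
      rw [hc]
      apply Finset.sum_eq_zero
      intro f hf; rw [hF0 f hf, mul_zero]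
    refine ⟨0, Set.ext fun x => ?_⟩
    simp only [Set.mem_setOf_eq]
    constructor
    · rintro ⟨N, hNX, hMN, hidx, hxN⟩
      have h := AddSubgroup.nsmul_index_mem (M.addSubgroupOf N) (⟨x, hxN⟩ : N)
      rw [AddSubgroup.mem_addSubgroupOf] at h
      have h2 : (M.addSubgroupOf N).index • x ∈ M := h
      have h3 : (M.addSubgroupOf N).index • x = 0 := hM0 _ h2
      rw [nsmul_eq_mul] at h3
      rcases mul_eq_zero.mp h3 with h4 | h4
      · exact absurd (by exact_mod_cast h4) hidx
      · exact ⟨0, by rw [h4]; simp⟩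
    · rintro ⟨c, hc⟩
      have hx0 : x = 0 := by rw [hc, mul_zero]
      subst hx0
      have hMbot : M ≤ ⊥ := fun m hm => AddSubgroup.mem_bot.mpr (hM0 m hm)
      refine ⟨⊥, ?_, hMbot, ?_, AddSubgroup.mem_bot.mpr rfl⟩
      · intro y hy
        rw [AddSubgroup.mem_bot] at hy
        rw [hy, mul_zero]
        exact AddSubgroup.zero_mem _
      · have htop : M.addSubgroupOf ⊥ = ⊤ := by
          ext ⟨y, hy⟩
          simp only [AddSubgroup.mem_top, iff_true, AddSubgroup.mem_addSubgroupOf]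
          rw [AddSubgroup.mem_bot] at hy
          have : (⟨y, hy⟩ : (⊥ : AddSubgroup (Polynomial ℚ))) = ⟨0, by simp⟩ := by
            exact Subtype.ext hy
          rw [show y = 0 from hy]
          exact M.zero_mem
        rw [htop, AddSubgroup.index_top]
        exact one_ne_zero
  · push_neg at hF0
    obtain ⟨f₀, hf₀F, hf₀⟩ := hF0
    -- principal generator of the span over ℚ[X]
    obtain ⟨d', hd'span⟩ :=
      (IsPrincipalIdealRing.principal (Ideal.span (↑F : Set (Polynomial ℚ)))).principal
    have hd'0 : d' ≠ 0 := by
      intro h0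
      have hf₀mem : f₀ ∈ Ideal.span (↑F : Set (Polynomial ℚ)) := Ideal.subset_span hf₀F
      rw [hd'span, h0] at hf₀mem
      rw [show (Submodule.span (Polynomial ℚ) {(0 : Polynomial ℚ)}) = ⊥ from
        Submodule.span_zero_singleton _] at hf₀mem
      exact hf₀ (Submodule.mem_bot _ |>.mp hf₀mem)
    have hdvd : ∀ f ∈ F, d' ∣ f := by
      intro f hf
      have : f ∈ Ideal.span (↑F : Set (Polynomial ℚ)) := Ideal.subset_span hf
      rw [hd'span] at this
      exact Ideal.mem_span_singleton.mp this
    have hdiv : ∀ f ∈ F, d' * (f / d') = f := fun f hf =>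
      EuclideanDomain.mul_div_cancel' hd'0 (hdvd f hf)
    obtain ⟨m₁, hm₁, hclr₁⟩ := clear_denoms F (fun f => f / d')
    have hGGex : ∀ f ∈ F, ∃ c : Polynomial ℤ, phi c = (m₁ : Polynomial ℚ) * (f / d') :=
      fun f hf => RingHom.mem_range.mp (hclr₁ f hf)
    choose! GG hGG using hGGex
    set e : ℤ := F.gcd (fun f => (GG f).content) with he
    have hnorm : normalize e = e := Finset.normalize_gcd
    have hepos : 0 ≤ e := Int.nonneg_of_normalize_eq_self hnorm
    have hm₁Q : ((m₁ : ℚ)) ≠ 0 := Nat.cast_ne_zero.mpr hm₁.ne'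
    have hm₁QX : ((m₁ : Polynomial ℚ)) ≠ 0 := by
      exact_mod_cast Nat.cast_ne_zero.mpr hm₁.ne'
    have hne : e ≠ 0 := by
      intro h0
      rw [he] at h0
      have hGG0 : GG f₀ = 0 :=
        Polynomial.content_eq_zero_iff.mp (Finset.gcd_eq_zero_iff.mp h0 f₀ hf₀F)
      have : (m₁ : Polynomial ℚ) * (f₀ / d') = 0 := by
        rw [← hGG f₀ hf₀F, hGG0, map_zero]
      rcases mul_eq_zero.mp this with h | h
      · exact hm₁QX h
      · apply hf₀
        rw [← hdiv f₀ hf₀F, h, mul_zero]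
    have hG'ex : ∀ f ∈ F, ∃ w : Polynomial ℤ, GG f = C e * w := by
      intro f hf
      have h1 : C e ∣ C ((GG f).content) := map_dvd C (Finset.gcd_dvd hf)
      exact h1.trans (Polynomial.C_content_dvd _)
    choose! G' hG' using hG'ex
    set γ : Polynomial ℚ := d' * C ((e : ℚ) / (m₁ : ℚ)) with hγ
    have hγ0 : γ ≠ 0 := by
      apply mul_ne_zero hd'0
      rw [Ne, Polynomial.C_eq_zero]
      exact div_ne_zero (Int.cast_ne_zero.mpr hne) hm₁Q
    have hCeG : ∀ f ∈ F, C ((e : ℚ)) * phi (G' f) = (m₁ : Polynomial ℚ) * (f / d') := by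
      intro f hf
      have h1 : phi (GG f) = C ((e : ℚ)) * phi (G' f) := by
        rw [hG' f hf, map_mul]
        congr 1
        simp [Polynomial.map_C]
      rw [← h1, hGG f hf]
    have hkey : ∀ f ∈ F, γ * phi (G' f) = f := by
      intro f hf
      have h3 : Polynomial.C ((e : ℚ) / (m₁ : ℚ))
          = C (((m₁ : ℚ))⁻¹) * C ((e : ℚ)) := by
        rw [← Polynomial.C_mul]
        congr 1
        field_simp
      calc γ * phi (G' f) = d' * (C (((m₁ : ℚ))⁻¹) * (C ((e : ℚ)) * phi (G' f))) := by
            rw [hγ, h3]; ring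
        _ = d' * (C (((m₁ : ℚ))⁻¹) * ((m₁ : Polynomial ℚ) * (f / d'))) := by
            rw [hCeG f hf]
        _ = (d' * (f / d')) * (C (((m₁ : ℚ))⁻¹) * (m₁ : Polynomial ℚ)) := by ring
        _ = f := by
            rw [← Polynomial.C_eq_natCast, ← Polynomial.C_mul, inv_mul_cancel₀ hm₁Q,
              Polynomial.C_1, mul_one, hdiv f hf]
    set Iid : Ideal (Polynomial ℤ) := Ideal.span (↑(F.image G') : Set (Polynomial ℤ))
      with hIid
    have hOne : ∀ f ∈ F, G' f ∈ Iid := fun f hf =>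
      Ideal.subset_span (Finset.mem_coe.mpr (Finset.mem_image_of_mem G' hf))
    have hMI : ∀ x, x ∈ M ↔ ∃ z ∈ Iid, x = γ * phi z := by
      intro x
      constructor
      · intro hx
        obtain ⟨c, hc⟩ := hrep x hx
        refine ⟨∑ f ∈ F, c f * G' f, Ideal.sum_mem _ fun f hf =>
          Ideal.mul_mem_left _ _ (hOne f hf), ?_⟩
        rw [hc, map_sum, Finset.mul_sum]
        apply Finset.sum_congr rfl
        intro f hf
        rw [map_mul]
        have h0 : (c f).map (Int.castRingHom ℚ) = phi (c f) := rfl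
        rw [h0, show γ * (phi (c f) * phi (G' f)) = phi (c f) * (γ * phi (G' f)) from by
          ring, hkey f hf]
      · rintro ⟨z, hz, rfl⟩
        induction hz using Submodule.span_induction with
        | mem y hy =>
          obtain ⟨f, hf, rfl⟩ := Finset.mem_image.mp (Finset.mem_coe.mp hy)
          rw [hkey f hf]
          exact hFM hf
        | zero => rw [map_zero, mul_zero]; exact M.zero_mem
        | add u v hu hv hpu hpv => rw [map_add, mul_add]; exact M.add_mem hpu hpv
        | smul a u hu hpu =>
          have : γ * phi (a • u) = phi a * (γ * phi u) := by
            rw [smul_eq_mul, map_mul]; ring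
          rw [this]
          exact mul_phi_mem M hXM a hpu
    -- integer in the ideal
    have hd'mem : d' ∈ Ideal.span (↑F : Set (Polynomial ℚ)) := by
      rw [hd'span]; exact Ideal.mem_span_singleton_self d'
    obtain ⟨a, -, ha⟩ := Submodule.mem_span_finset.mp hd'mem
    have ha' : ∑ f ∈ F, a f * f = d' := by
      rw [← ha]; apply Finset.sum_congr rfl; intro f hf; rw [smul_eq_mul]
    have hsum1 : ∑ f ∈ F, a f * (f / d') = 1 := by
      apply mul_left_cancel₀ hd'0
      rw [Finset.mul_sum, mul_one]
      calc ∑ f ∈ F, d' * (a f * (f / d')) = ∑ f ∈ F, a f * (d' * (f / d')) := by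
            apply Finset.sum_congr rfl; intro f hf; ring
        _ = ∑ f ∈ F, a f * f := by
            apply Finset.sum_congr rfl; intro f hf; rw [hdiv f hf]
        _ = d' := ha'
    obtain ⟨m₂, hm₂, hclr₂⟩ := clear_denoms F a
    have hBex : ∀ f ∈ F, ∃ c : Polynomial ℤ, phi c = (m₂ : Polynomial ℚ) * a f :=
      fun f hf => RingHom.mem_range.mp (hclr₂ f hf)
    choose! B hB using hBex
    have hw : phi (C e * ∑ f ∈ F, B f * G' f) = ((m₁ * m₂ : ℕ) : Polynomial ℚ) := by
      rw [map_mul, map_sum]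
      have hCe : phi (C e) = C ((e : ℚ)) := by simp [Polynomial.map_C]
      calc phi (C e) * ∑ f ∈ F, phi (B f * G' f)
          = ∑ f ∈ F, phi (B f) * (C ((e : ℚ)) * phi (G' f)) := by
            rw [Finset.mul_sum]
            apply Finset.sum_congr rfl
            intro f hf
            rw [map_mul, hCe]; ring
        _ = ∑ f ∈ F, ((m₂ : Polynomial ℚ) * a f) * ((m₁ : Polynomial ℚ) * (f / d')) := by
            apply Finset.sum_congr rfl
            intro f hf
            rw [hCeG f hf, hB f hf]
        _ = ((m₁ * m₂ : ℕ) : Polynomial ℚ) * ∑ f ∈ F, a f * (f / d') := by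
            rw [Finset.mul_sum]
            apply Finset.sum_congr rfl
            intro f hf
            push_cast
            ring
        _ = ((m₁ * m₂ : ℕ) : Polynomial ℚ) := by rw [hsum1, mul_one]
    have hn'mem : ((m₁ * m₂ : ℕ) : Polynomial ℤ) ∈ Iid := by
      have h1 : phi (((m₁ * m₂ : ℕ) : Polynomial ℤ)) = ((m₁ * m₂ : ℕ) : Polynomial ℚ) :=
        map_natCast phi _
      have heq : ((m₁ * m₂ : ℕ) : Polynomial ℤ) = C e * ∑ f ∈ F, B f * G' f :=
        phi_inj (by rw [h1, hw])
      rw [heq]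
      exact Ideal.mul_mem_left _ _ (Ideal.sum_mem _ fun f hf =>
        Ideal.mul_mem_left _ _ (hOne f hf))
    -- content condition
    have hcont : ∀ r : ℤ, Prime r → ∃ z ∈ Iid, ¬ C r ∣ z := by
      intro r hr
      by_contra hcon
      push_neg at hcon
      have hdvdall : ∀ f ∈ F, r ∣ (G' f).content := by
        intro f hf
        have h := hcon (G' f) (hOne f hf)
        rw [Polynomial.C_dvd_iff_dvd_coeff] at h
        rw [Polynomial.content]
        exact Finset.dvd_gcd fun i _ => h i
      have her : e * r ∣ e := by
        conv_rhs => rw [he]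
        apply Finset.dvd_gcd
        intro f hf
        have h1 : (GG f).content = e * (G' f).content := by
          rw [hG' f hf, Polynomial.content_C_mul, hnorm]
        rw [h1]
        exact mul_dvd_mul_left e (hdvdall f hf)
      have hr1 : r ∣ 1 := by
        have h2 : e * r ∣ e * 1 := by rwa [mul_one]
        exact (mul_dvd_mul_iff_left hne).mp h2
      exact hr.not_unit (isUnit_of_dvd_one hr1)
    have hfinI : Finite (Polynomial ℤ ⧸ Iid) :=
      finite_quot (m₁ * m₂) Iid (Nat.mul_pos hm₁ hm₂) hn'mem hcont
    -- the subgroup Ñ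
    set Ntil : AddSubgroup (Polynomial ℚ) :=
      { carrier := {x | ∃ c : Polynomial ℤ, x = phi c * γ}
        zero_mem' := ⟨0, by simp⟩
        add_mem' := by
          rintro x y ⟨cx, rfl⟩ ⟨cy, rfl⟩
          exact ⟨cx + cy, by rw [map_add]; ring⟩
        neg_mem' := by
          rintro x ⟨cx, rfl⟩
          exact ⟨-cx, by rw [map_neg]; ring⟩ } with hNtil
    have hNtilmem : ∀ x, x ∈ Ntil ↔ ∃ c : Polynomial ℤ, x = phi c * γ := fun _ => Iff.rfl
    -- the equivalence
    have hEbij : Function.Bijective (fun c : Polynomial ℤ =>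
        (⟨phi c * γ, ⟨c, rfl⟩⟩ : Ntil)) := by
      constructor
      · intro c c' hcc
        have : phi c * γ = phi c' * γ := congrArg Subtype.val hcc
        exact phi_inj (mul_right_cancel₀ hγ0 this)
      · rintro ⟨y, c, rfl⟩
        exact ⟨c, rfl⟩
    set Ehom : Polynomial ℤ →+ Ntil :=
      { toFun := fun c => (⟨phi c * γ, ⟨c, rfl⟩⟩ : Ntil)
        map_zero' := by
          apply Subtype.ext
          simp
        map_add' := by
          intro c c'
          apply Subtype.ext
          simp [add_mul] } with hEhom
    set E : Polynomial ℤ ≃+ Ntil := AddEquiv.ofBijective Ehom hEbij with hE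
    have hmap : AddSubgroup.map (E : Polynomial ℤ →+ Ntil) Iid.toAddSubgroup
        = M.addSubgroupOf Ntil := by
      ext ⟨y, hy⟩
      rw [AddSubgroup.mem_addSubgroupOf]
      simp only [AddSubgroup.mem_map]
      constructor
      · rintro ⟨z, hzI, hz⟩
        have hz' : phi z * γ = y := congrArg Subtype.val hz
        exact (hMI y).mpr ⟨z, hzI, by rw [← hz']; ring⟩
      · intro hyM
        obtain ⟨z, hzI, hz⟩ := (hMI y).mp hyM
        refine ⟨z, hzI, Subtype.ext ?_⟩
        show phi z * γ = y
        rw [hz]; ring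
    have hfinA : Finite (Polynomial ℤ ⧸ Iid.toAddSubgroup) := hfinI
    have hQe : (Polynomial ℤ ⧸ Iid.toAddSubgroup) ≃+ (Ntil ⧸ M.addSubgroupOf Ntil) :=
      QuotientAddGroup.congr Iid.toAddSubgroup (M.addSubgroupOf Ntil) E hmap
    have hfinQ : Finite (Ntil ⧸ M.addSubgroupOf Ntil) := Finite.of_equiv _ hQe.toEquiv
    have hidxN : (M.addSubgroupOf Ntil).index ≠ 0 := by
      rw [AddSubgroup.index]
      rw [Nat.card_ne_zero]
      exact ⟨inferInstance, hfinQ⟩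
    -- conclusion
    refine ⟨γ, Set.ext fun x => ?_⟩
    simp only [Set.mem_setOf_eq]
    constructor
    · rintro ⟨N, hNX, hMN, hidx, hxN⟩
      have hQfin : Finite (N ⧸ M.addSubgroupOf N) := Nat.finite_of_card_ne_zero hidx
      set nn := (M.addSubgroupOf N).index with hnn
      have hnsx : nn • x ∈ M := by
        have h := AddSubgroup.nsmul_index_mem (M.addSubgroupOf N) (⟨x, hxN⟩ : N)
        rw [AddSubgroup.mem_addSubgroupOf] at h
        exact h
      obtain ⟨z₀, hz₀I, hz₀⟩ := (hMI (nn • x)).mp hnsx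
      have hnnQ : ((nn : ℚ)) ≠ 0 := Nat.cast_ne_zero.mpr hidx
      set q : Polynomial ℚ := C (((nn : ℚ))⁻¹) * phi z₀ with hq
      have hxq : x = γ * q := by
        have h1 : (nn : Polynomial ℚ) * x = γ * phi z₀ := by
          rw [← hz₀, nsmul_eq_mul]
        calc x = (C (((nn : ℚ))⁻¹) * (nn : Polynomial ℚ)) * x := by
              rw [← Polynomial.C_eq_natCast, ← Polynomial.C_mul, inv_mul_cancel₀ hnnQ,
                Polynomial.C_1, one_mul]
          _ = C (((nn : ℚ))⁻¹) * ((nn : Polynomial ℚ) * x) := by ring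
          _ = C (((nn : ℚ))⁻¹) * (γ * phi z₀) := by rw [h1]
          _ = γ * q := by rw [hq]; ring
      set D := q.natDegree + 1 with hD
      obtain ⟨k, l, hkl, heqq⟩ := Finite.exists_ne_map_eq_of_infinite
        (fun k : ℕ => QuotientAddGroup.mk (s := M.addSubgroupOf N)
          (⟨X ^ (k * D) * x, xpow_mul_mem N hNX hxN _⟩ : N))
      -- WLOG k < l
      have hmain : ∀ k l : ℕ, k < l →
          (QuotientAddGroup.mk (s := M.addSubgroupOf N)
            (⟨X ^ (k * D) * x, xpow_mul_mem N hNX hxN _⟩ : N) =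
          QuotientAddGroup.mk (s := M.addSubgroupOf N)
            (⟨X ^ (l * D) * x, xpow_mul_mem N hNX hxN _⟩ : N)) →
          ∃ c : Polynomial ℤ, x = (c.map (Int.castRingHom ℚ)) * γ := by
        intro k l hklt heq2
        rw [QuotientAddGroup.eq] at heq2
        rw [AddSubgroup.mem_addSubgroupOf] at heq2
        have hmem : -(X ^ (k * D) * x) + X ^ (l * D) * x ∈ M := heq2
        obtain ⟨z₁, hz₁I, hz₁⟩ := (hMI _).mp hmem
        have hcancel : q * X ^ (l * D) - q * X ^ (k * D) = phi z₁ := by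
          apply mul_left_cancel₀ hγ0
          rw [← hz₁, hxq]
          ring
        have hlt : q.natDegree + k * D < l * D := by
          have h5 : k * D + D ≤ l * D := by
            calc k * D + D = (k + 1) * D := by ring
              _ ≤ l * D := Nat.mul_le_mul_right D (Nat.succ_le_of_lt hklt)
          omega
        have hqr : q ∈ phi.range := mem_range_of_shift hlt ⟨z₁, hcancel.symm⟩
        obtain ⟨c, hc⟩ := hqr
        exact ⟨c, by rw [hxq, ← hc]; exact mul_comm _ _⟩
      rcases lt_or_gt_of_ne hkl with h | h
      · exact hmain k l h heqq
      · exact hmain l k h heqq.symm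
    · rintro ⟨c, hc⟩
      refine ⟨Ntil, ?_, ?_, hidxN, ⟨c, hc⟩⟩
      · rintro y ⟨c', rfl⟩
        refine ⟨X * c', ?_⟩
        have hX : phi (X * c') = X * phi c' := by
          rw [map_mul]
          congr 1
          simp
        show X * (phi c' * γ) = phi (X * c') * γ
        rw [hX]
        ring
      · intro m hm
        obtain ⟨z, hzI, hz⟩ := (hMI m).mp hm
        exact ⟨z, by rw [hz]; ring⟩
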